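/- Let T = ⟨(t_0,x_0,y_0),…,(t_N,x_N,y_N)⟩ be a trajectory and let 𝒫 be a places-of-interest application (PIA). Distinct stops of T with respect to 𝒫 have disjoint index ranges: if (i,j) and (i',j') are stops of T with respect to 𝒫 and the integer intervals [i,j] and [i',j'] have a common element, then (i,j) = (i',j'). -/

import Mathlib

/-- A *stop* of the trajectory with samples `(t i, x i, y i)` for `i : Fin (N+1)`
(with `t` strictly increasing) with respect to a single place of interest (PoI)
having geometry `R ⊆ ℝ²` and minimum duration `Δ`.  The pair of indices `(i, j)`
must satisfy: (a) all sample points with index in `[i, j]` lie in `R`;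
(b) the duration condition `t j - t i > Δ`; and (c) maximality of the run:
the sample point just before index `i` (if any) and just after index `j`
(if any) are not in `R`. -/
def IsStopWith (N : ℕ) (t x y : Fin (N + 1) → ℝ) (R : Set (ℝ × ℝ)) (Δ : ℝ)
    (i j : Fin (N + 1)) : Prop :=
  i ≤ j ∧
  (∀ k : Fin (N + 1), i ≤ k → k ≤ j → (x k, y k) ∈ R) ∧
  Δ < t j - t i ∧
  (∀ i' : Fin (N + 1), (i' : ℕ) + 1 = (i : ℕ) → (x i', y i') ∉ R) ∧
  (∀ j' : Fin (N + 1), (j : ℕ) + 1 = (j' : ℕ) → (x j', y j') ∉ R)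

/-- `(i, j)` is a stop of the trajectory with respect to the
places-of-interest application given by the (finitely many) geometries `R k`
and minimum durations `Δ k`, `k : ι`:  some PoI of the application witnesses
conditions (a), (b) and (c). -/
def IsStop {ι : Type*} (N : ℕ) (t x y : Fin (N + 1) → ℝ)
    (R : ι → Set (ℝ × ℝ)) (Δ : ι → ℝ) (i j : Fin (N + 1)) : Prop :=
  ∃ k : ι, IsStopWith N t x y (R k) (Δ k) i j

/-- distinct stops have disjoint index ranges: if the integer
intervals `[i, j]` and `[i', j']` of two stops share an element, then the
stops coincide. -/
theorem stops_index_ranges_disjoint {ι : Type*} [Finite ι] (N : ℕ)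
    (t x y : Fin (N + 1) → ℝ) (ht : StrictMono t)
    (R : ι → Set (ℝ × ℝ)) (Δ : ι → ℝ)
    (hΔ : ∀ k, 0 < Δ k)
    (hdisj : ∀ k l, k ≠ l → Disjoint (R k) (R l))
    (i j i' j' : Fin (N + 1))
    (h1 : IsStop N t x y R Δ i j) (h2 : IsStop N t x y R Δ i' j')
    (m : Fin (N + 1))
    (him : i ≤ m) (hmj : m ≤ j) (him' : i' ≤ m) (hmj' : m ≤ j') :
    i = i' ∧ j = j' := by
  obtain ⟨k, hk1, hk2, hk3, hk4, hk5⟩ := h1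
  obtain ⟨k', hl1, hl2, hl3, hl4, hl5⟩ := h2
  have hmem : (x m, y m) ∈ R k := hk2 m him hmj
  have hmem' : (x m, y m) ∈ R k' := hl2 m him' hmj'
  have hkk : k = k' := by
    by_contra h
    exact (hdisj k k' h).ne_of_mem hmem hmem' rfl
  subst hkk
  have hii : (i : ℕ) = (i' : ℕ) := by
    rcases lt_trichotomy (i : ℕ) (i' : ℕ) with h | h | h
    · exfalso
      have hi'pos : 0 < (i' : ℕ) := by omega
      set p : Fin (N + 1) := ⟨(i' : ℕ) - 1, by omega⟩ with hp
      have hsucc : (p : ℕ) + 1 = (i' : ℕ) := by simp [hp]; omega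
      refine hl4 p hsucc (hk2 p ?_ ?_)
      · exact Fin.le_def.mpr (by simp [hp]; omega)
      · exact Fin.le_def.mpr (by
          have h1 : (p : ℕ) < (i' : ℕ) := by omega
          have h2 : (i' : ℕ) ≤ (m : ℕ) := him'
          have h3 : (m : ℕ) ≤ (j : ℕ) := hmj
          omega)
    · exact h
    · exfalso
      have hipos : 0 < (i : ℕ) := by omega
      set p : Fin (N + 1) := ⟨(i : ℕ) - 1, by omega⟩ with hp
      have hsucc : (p : ℕ) + 1 = (i : ℕ) := by simp [hp]; omega
      refine hk4 p hsucc (hl2 p ?_ ?_)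
      · exact Fin.le_def.mpr (by simp [hp]; omega)
      · exact Fin.le_def.mpr (by
          have h1 : (p : ℕ) < (i : ℕ) := by omega
          have h2 : (i : ℕ) ≤ (m : ℕ) := him
          have h3 : (m : ℕ) ≤ (j' : ℕ) := hmj'
          omega)
  have hjj : (j : ℕ) = (j' : ℕ) := by
    rcases lt_trichotomy (j : ℕ) (j' : ℕ) with h | h | h
    · exfalso
      have hlt : (j : ℕ) + 1 < N + 1 := by
        have := j'.isLt; omega
      set q : Fin (N + 1) := ⟨(j : ℕ) + 1, hlt⟩ with hq
      refine hk5 q (by simp [hq]) (hl2 q ?_ ?_)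
      · exact Fin.le_def.mpr (by
          have h2 : (i' : ℕ) ≤ (m : ℕ) := him'
          have h3 : (m : ℕ) ≤ (j : ℕ) := hmj
          simp [hq]; omega)
      · exact Fin.le_def.mpr (by simp [hq]; omega)
    · exact h
    · exfalso
      have hlt : (j' : ℕ) + 1 < N + 1 := by
        have := j.isLt; omega
      set q : Fin (N + 1) := ⟨(j' : ℕ) + 1, hlt⟩ with hq
      refine hl5 q (by simp [hq]) (hk2 q ?_ ?_)
      · exact Fin.le_def.mpr (by
          have h2 : (i : ℕ) ≤ (m : ℕ) := him
          have h3 : (m : ℕ) ≤ (j' : ℕ) := hmj'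
          simp [hq]; omega)
      · exact Fin.le_def.mpr (by simp [hq]; omega)
  exact ⟨Fin.ext hii, Fin.ext hjj⟩
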